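/- Let s ∈ (0,1), γ > 1, ξ > 0 and φ(x) = (|x|+ξ)^{−γ} on ℝ. There exists a constant C = C(γ, s, ξ) > 0 such that for all |x| ≥ |x₀| > 1, the one-dimensional fractional Laplacian satisfies |(−Δ)^s φ(x)| ≤ C |x|^{−(1+2s)}. -/

import Mathlib

open MeasureTheory Set intervalIntegral

set_option maxHeartbeats 1000000


lemma setInt_add (f : ℝ → ℝ) (A : Set ℝ) (a : ℝ) :
    ∫ y in A, f y = ∫ z in (fun z => a + z) ⁻¹' A, f (a + z) := by
  have e : MeasurableEmbedding (fun z : ℝ => a + z) :=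
    (Homeomorph.addLeft a).measurableEmbedding
  conv_lhs => rw [← Measure.IsAddLeftInvariant.map_add_left_eq_self (μ := (volume : Measure ℝ)) a]
  exact e.setIntegral_map f A

lemma setInt_neg (f : ℝ → ℝ) (A : Set ℝ) :
    ∫ y in A, f y = ∫ z in (fun z : ℝ => -z) ⁻¹' A, f (-z) := by
  have e : MeasurableEmbedding (fun z : ℝ => -z) :=
    (Homeomorph.neg ℝ).measurableEmbedding
  conv_lhs => rw [← Measure.map_neg_eq_self (volume : Measure ℝ)]
  exact e.setIntegral_map f A

lemma integrableOn_add_preimage (f : ℝ → ℝ) (A : Set ℝ) (a : ℝ)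
    (h : IntegrableOn f A) : IntegrableOn (fun z => f (a + z)) ((fun z => a + z) ⁻¹' A) := by
  have e : MeasurableEmbedding (fun z : ℝ => a + z) :=
    (Homeomorph.addLeft a).measurableEmbedding
  rw [← Measure.IsAddLeftInvariant.map_add_left_eq_self (μ := (volume : Measure ℝ)) a] at h
  exact (e.integrableOn_map_iff.mp h)

lemma integrableOn_neg_preimage (f : ℝ → ℝ) (A : Set ℝ)
    (h : IntegrableOn f A) : IntegrableOn (fun z => f (-z)) ((fun z : ℝ => -z) ⁻¹' A) := by
  have e : MeasurableEmbedding (fun z : ℝ => -z) :=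
    (Homeomorph.neg ℝ).measurableEmbedding
  rw [← Measure.map_neg_eq_self (volume : Measure ℝ)] at h
  exact (e.integrableOn_map_iff.mp h)

lemma tail_abs (p c : ℝ) (hp : 1 < p) (hc : 0 < c) :
    IntegrableOn (fun z : ℝ => |z| ^ (-p)) {z : ℝ | c ≤ |z|} ∧
      ∫ z in {z : ℝ | c ≤ |z|}, |z| ^ (-p) = 2 * c ^ (1 - p) / (p - 1) := by
  have hexp : -p < -1 := by linarith
  have hne : p - 1 ≠ 0 := by intro h; linarith [sub_eq_zero.mp h]
  have hIci : IntegrableOn (fun z : ℝ => |z| ^ (-p)) (Ici c) := by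
    rw [integrableOn_Ici_iff_integrableOn_Ioi]
    exact (integrableOn_Ioi_rpow_of_lt hexp hc).congr_fun
      (fun z hz => by rw [abs_of_pos (hc.trans hz)]) measurableSet_Ioi
  have hIciV : ∫ z in Ici c, |z| ^ (-p) = c ^ (1 - p) / (p - 1) := by
    rw [integral_Ici_eq_integral_Ioi,
      setIntegral_congr_fun measurableSet_Ioi (g := fun z : ℝ => z ^ (-p))
        (fun z hz => by rw [abs_of_pos (hc.trans hz)]),
      integral_Ioi_rpow_of_lt hexp hc, show -p + 1 = 1 - p by ring]
    rw [show (1:ℝ) - p = -(p - 1) by ring, div_neg, neg_div, neg_neg]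
  have hpre2 : (fun z : ℝ => -z) ⁻¹' (Ici c) = Iic (-c) := by ext z; simp
  have hIic : IntegrableOn (fun z : ℝ => |z| ^ (-p)) (Iic (-c)) := by
    have h2 := integrableOn_neg_preimage (fun z : ℝ => |z| ^ (-p)) (Ici c) hIci
    rw [hpre2] at h2
    exact h2.congr_fun (fun z _ => by simp [abs_neg]) measurableSet_Iic
  have hIicV : ∫ z in Iic (-c), |z| ^ (-p) = c ^ (1 - p) / (p - 1) := by
    rw [setInt_neg (fun z : ℝ => |z| ^ (-p)) (Iic (-c))]
    have hpre : (fun z : ℝ => -z) ⁻¹' (Iic (-c)) = Ici c := by ext z; simp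
    rw [hpre]
    simp only [abs_neg]
    exact hIciV
  have hset : {z : ℝ | c ≤ |z|} = Iic (-c) ∪ Ici c := by
    ext z; simp only [mem_setOf_eq, mem_union, mem_Iic, mem_Ici]
    rw [le_abs]
    constructor
    · rintro (h | h); · right; exact h
      · left; linarith
    · rintro (h | h); · right; linarith
      · left; exact h
  have hdisj : Disjoint (Iic (-c)) (Ici c) := by
    apply Iic_disjoint_Ici.mpr; simp; linarith
  constructor
  · rw [hset]; exact hIic.union hIci
  · rw [hset, setIntegral_union hdisj measurableSet_Ici hIic hIci, hIicV, hIciV]; ring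

lemma phi_int (γ ξ : ℝ) (hγ : 1 < γ) (hξ : 0 < ξ) :
    Integrable (fun y : ℝ => (|y| + ξ) ^ (-γ)) ∧
      ∫ y : ℝ, (|y| + ξ) ^ (-γ) = 2 * ξ ^ (1 - γ) / (γ - 1) := by
  have hexp : -γ < -1 := by linarith
  have hne : γ - 1 ≠ 0 := by intro h; linarith [sub_eq_zero.mp h]
  have hIoi : IntegrableOn (fun t : ℝ => (t + ξ) ^ (-γ)) (Ioi 0) := by
    have h := integrableOn_add_preimage (fun t : ℝ => t ^ (-γ)) (Ioi ξ) ξ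
      (integrableOn_Ioi_rpow_of_lt hexp hξ)
    have hpre : (fun z : ℝ => ξ + z) ⁻¹' (Ioi ξ) = Ioi 0 := by ext z; simp
    rw [hpre] at h
    exact h.congr_fun (fun t _ => by rw [add_comm]) measurableSet_Ioi
  have hIoiV : ∫ t in Ioi (0:ℝ), (t + ξ) ^ (-γ) = ξ ^ (1 - γ) / (γ - 1) := by
    rw [setInt_add (fun t : ℝ => (t + ξ) ^ (-γ)) (Ioi 0) (-ξ)]
    have hpre : (fun z : ℝ => -ξ + z) ⁻¹' (Ioi 0) = Ioi ξ := by
      ext z; simp only [mem_preimage, mem_Ioi]; constructor <;> intro h <;> linarith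
    rw [hpre,
      setIntegral_congr_fun measurableSet_Ioi (g := fun t : ℝ => t ^ (-γ))
        (fun t _ => by rw [show -ξ + t + ξ = t by ring]),
      integral_Ioi_rpow_of_lt hexp hξ, show -γ + 1 = 1 - γ by ring,
      show (1:ℝ) - γ = -(γ - 1) by ring, div_neg, neg_div, neg_neg]
  have hIoi' : IntegrableOn (fun y : ℝ => (|y| + ξ) ^ (-γ)) (Ioi 0) :=
    hIoi.congr_fun (fun t ht => by rw [abs_of_pos ht]) measurableSet_Ioi
  have hint : Integrable (fun y : ℝ => (|y| + ξ) ^ (-γ)) := by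
    have hIic : IntegrableOn (fun y : ℝ => (|y| + ξ) ^ (-γ)) (Iic 0) := by
      have h := integrableOn_neg_preimage (fun y : ℝ => (|y| + ξ) ^ (-γ)) (Ici 0)
        (Iff.mpr integrableOn_Ici_iff_integrableOn_Ioi hIoi')
      have hpre : (fun z : ℝ => -z) ⁻¹' (Ici (0:ℝ)) = Iic 0 := by ext z; simp
      rw [hpre] at h
      exact h.congr_fun (fun z _ => by simp [abs_neg]) measurableSet_Iic
    have := hIic.union hIoi'
    rwa [Iic_union_Ioi, integrableOn_univ] at this
  refine ⟨hint, ?_⟩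
  rw [show (fun y : ℝ => (|y| + ξ) ^ (-γ)) = (fun y : ℝ => (fun t : ℝ => (t + ξ) ^ (-γ)) |y|)
    from rfl, integral_comp_abs (f := fun t : ℝ => (t + ξ) ^ (-γ)), hIoiV]
  ring


lemma taylor2 {f f' : ℝ → ℝ} {x z M : ℝ} (hz : 0 ≤ z) (hM : 0 ≤ M)
    (hd : ∀ t ∈ Set.Icc (x - z) (x + z), HasDerivAt f (f' t) t)
    (hc : ContinuousOn f' (Set.Icc (x - z) (x + z)))
    (hlip : ∀ t ∈ Set.Icc (x - z) (x + z), |f' t - f' x| ≤ M * |t - x|) :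
    |f (x + z) + f (x - z) - 2 * f x| ≤ M * z ^ 2 := by
  set g : ℝ → ℝ := fun t => f (x + t) + f (x - t) - 2 * f x with hg
  set g' : ℝ → ℝ := fun t => f' (x + t) - f' (x - t) with hg'
  have mem : ∀ t ∈ Set.Icc (0:ℝ) z, x + t ∈ Set.Icc (x - z) (x + z) ∧
      x - t ∈ Set.Icc (x - z) (x + z) := by
    intro t ht
    constructor <;> constructor <;> simp at ht ⊢ <;> linarith [ht.1, ht.2]
  have hgd : ∀ t ∈ Set.Icc (0:ℝ) z, HasDerivAt g (g' t) t := by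
    intro t ht
    have h1 := (hd _ (mem t ht).1).comp t ((hasDerivAt_id t).const_add x)
    have h2 := (hd _ (mem t ht).2).comp t ((hasDerivAt_const t x).sub (hasDerivAt_id t))
    simpa [hg, hg', ← sub_eq_add_neg] using ((h1.add h2).sub_const (2 * f x))
  have hgc : ContinuousOn g' (Set.Icc 0 z) := by
    apply ContinuousOn.sub
    · exact hc.comp (by fun_prop) (fun t ht => (mem t ht).1)
    · exact hc.comp (by fun_prop) (fun t ht => (mem t ht).2)
  have key : g z - g 0 = ∫ t in (0:ℝ)..z, g' t := by
    rw [intervalIntegral.integral_eq_sub_of_hasDerivAt]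
    · intro t ht; rw [Set.uIcc_of_le hz] at ht; exact hgd t ht
    · exact (hgc.mono (by rw [Set.uIcc_of_le hz])).intervalIntegrable
  have hg0 : g 0 = 0 := by simp [hg]; ring
  have hb : ∀ t ∈ Set.Icc (0:ℝ) z, |g' t| ≤ 2 * M * t := by
    intro t ht
    have e1 := hlip _ (mem t ht).1
    have e2 := hlip _ (mem t ht).2
    have : |g' t| ≤ |f' (x+t) - f' x| + |f' (x-t) - f' x| := by
      simp only [hg']
      calc |f' (x + t) - f' (x - t)|
          = |(f' (x + t) - f' x) - (f' (x - t) - f' x)| := by ring_nf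
        _ ≤ _ := abs_sub _ _
    simp only [add_sub_cancel_left] at e1
    have e2' : |f' (x - t) - f' x| ≤ M * t := by
      have : |x - t - x| = |t| := by ring_nf; exact abs_neg t
      rw [this, abs_of_nonneg ht.1] at e2; exact e2
    rw [abs_of_nonneg ht.1] at e1
    linarith
  have : |g z| ≤ M * z ^ 2 := by
    have e : g z = ∫ t in (0:ℝ)..z, g' t := by rw [← key, hg0, sub_zero]
    rw [e]
    calc |∫ t in (0:ℝ)..z, g' t| ≤ ∫ t in (0:ℝ)..z, 2 * M * t := by
          apply intervalIntegral.abs_integral_le_integral_abs hz |>.trans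
          apply intervalIntegral.integral_mono_on hz
          · exact ((hgc.mono (by rw [Set.uIcc_of_le hz])).intervalIntegrable).abs
          · exact (continuous_const.mul continuous_id).intervalIntegrable 0 z
          · intro t ht; exact hb t ht
      _ = M * z ^ 2 := by
          rw [intervalIntegral.integral_const_mul]
          have e2 : (∫ t in (0:ℝ)..z, t) = (z^2 - 0^2)/2 := integral_id
          rw [e2]; ring
  simpa [hg] using this

lemma phi_sym (γ ξ : ℝ) (hγ : 1 < γ) (hξ : 0 < ξ) {x z : ℝ} (hx : 0 < x) (hz : 0 ≤ z)
    (hzr : 2 * z < x) :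
    |(x + z + ξ) ^ (-γ) + (x - z + ξ) ^ (-γ) - 2 * (x + ξ) ^ (-γ)| ≤
      γ * (γ + 1) * (x / 2) ^ (-γ - 2) * z ^ 2 := by
  have hγ0 : (0:ℝ) < γ := by linarith
  have hx2 : (0:ℝ) < x / 2 := by linarith
  have hmem : ∀ t ∈ Set.Icc (x - z) (x + z), x / 2 < t := by
    intro t ht; have := ht.1; simp at this ⊢; linarith
  have hpos : ∀ t ∈ Set.Icc (x - z) (x + z), (0:ℝ) < t + ξ := by
    intro t ht; have := hmem t ht; linarith
  set f : ℝ → ℝ := fun u => (u + ξ) ^ (-γ) with hf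
  set f' : ℝ → ℝ := fun u => -γ * (u + ξ) ^ (-γ - 1) with hf'
  set f'' : ℝ → ℝ := fun u => γ * (γ + 1) * (u + ξ) ^ (-γ - 2) with hf''
  have hd : ∀ t ∈ Set.Icc (x - z) (x + z), HasDerivAt f (f' t) t := by
    intro t ht
    have h := ((hasDerivAt_id t).add_const ξ).rpow_const (p := -γ) (Or.inl (hpos t ht).ne')
    simpa [hf, hf', mul_comm] using h
  have hd' : ∀ t ∈ Set.Icc (x - z) (x + z), HasDerivAt f' (f'' t) t := by
    intro t ht
    have h := (((hasDerivAt_id t).add_const ξ).rpow_const (p := -γ - 1)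
      (Or.inl (hpos t ht).ne')).const_mul (-γ)
    have e : f'' t = -(γ * ((-γ - 1) * (t + ξ) ^ (-γ - 1 - 1))) := by
      simp only [hf'']; rw [show -γ - 1 - 1 = -γ - 2 by ring]; ring
    rw [e]
    simpa [hf'] using h
  have hM : (0:ℝ) ≤ γ * (γ + 1) * (x / 2) ^ (-γ - 2) := by positivity
  have hbound : ∀ t ∈ Set.Icc (x - z) (x + z), ‖f'' t‖ ≤ γ * (γ + 1) * (x / 2) ^ (-γ - 2) := by
    intro t ht
    have h1 : (t + ξ) ^ (-γ - 2) ≤ (x / 2) ^ (-γ - 2) := by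
      apply Real.rpow_le_rpow_of_nonpos hx2 (by have := hmem t ht; linarith) (by linarith)
    have h2 : (0:ℝ) ≤ (t + ξ) ^ (-γ - 2) := Real.rpow_nonneg (hpos t ht).le _
    simp only [hf'', Real.norm_eq_abs]
    rw [abs_of_nonneg (by positivity)]
    have : (0:ℝ) ≤ γ * (γ + 1) := by positivity
    calc γ * (γ + 1) * (t + ξ) ^ (-γ - 2) ≤ γ * (γ + 1) * (x / 2) ^ (-γ - 2) := by
          exact mul_le_mul_of_nonneg_left h1 this
      _ = _ := rfl
  have hc : ContinuousOn f' (Set.Icc (x - z) (x + z)) := by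
    apply ContinuousOn.mul continuousOn_const
    exact ContinuousOn.rpow_const (by fun_prop) (fun t ht => Or.inl (hpos t ht).ne')
  have hlip : ∀ t ∈ Set.Icc (x - z) (x + z), |f' t - f' x| ≤
      γ * (γ + 1) * (x / 2) ^ (-γ - 2) * |t - x| := by
    intro t ht
    have hconv : Convex ℝ (Set.Icc (x - z) (x + z)) := convex_Icc _ _
    have hxmem : x ∈ Set.Icc (x - z) (x + z) := by constructor <;> simp <;> linarith
    have := hconv.norm_image_sub_le_of_norm_hasDerivWithin_le
      (fun u hu => (hd' u hu).hasDerivWithinAt) hbound hxmem ht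
    simpa [Real.norm_eq_abs] using this
  have := taylor2 hz hM hd hc hlip
  simpa [hf] using this

lemma phi_cont (γ ξ : ℝ) (hξ : 0 < ξ) : Continuous (fun y : ℝ => (|y| + ξ) ^ (-γ)) :=
  (continuous_abs.add continuous_const).rpow_const (fun y => Or.inl (add_pos_of_nonneg_of_pos (abs_nonneg y) hξ).ne')

lemma phi_le (γ ξ : ℝ) (hγ0 : 0 ≤ γ) (hξ : 0 < ξ) (y : ℝ) : (|y| + ξ) ^ (-γ) ≤ ξ ^ (-γ) :=
  Real.rpow_le_rpow_of_nonpos hξ (le_add_of_nonneg_left (abs_nonneg y)) (by linarith)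

lemma phi_mono (γ ξ : ℝ) (hγ0 : 0 ≤ γ) (hξ : 0 < ξ) {c y : ℝ} (hc : 0 < c) (h : c ≤ |y| + ξ) :
    (|y| + ξ) ^ (-γ) ≤ c ^ (-γ) :=
  Real.rpow_le_rpow_of_nonpos hc h (by linarith)

lemma f_meas (γ ξ p x : ℝ) (hξ : 0 < ξ) (hp : 0 ≤ p) :
    Measurable (fun y : ℝ => ((|x| + ξ) ^ (-γ) - (|y| + ξ) ^ (-γ)) / |x - y| ^ p) := by
  have h1 : Continuous (fun y : ℝ => (|x| + ξ) ^ (-γ) - (|y| + ξ) ^ (-γ)) :=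
    continuous_const.sub (phi_cont γ ξ hξ)
  have h2 : Continuous (fun y : ℝ => |x - y| ^ p) :=
    ((continuous_const.sub continuous_id).abs).rpow_const (fun y => Or.inr hp)
  exact h1.measurable.div h2.measurable

lemma tail_abs_shift (p c x : ℝ) (hp : 1 < p) (hc : 0 < c) :
    IntegrableOn (fun y : ℝ => |x - y| ^ (-p)) {y : ℝ | c ≤ |x - y|} ∧
      ∫ y in {y : ℝ | c ≤ |x - y|}, |x - y| ^ (-p) = 2 * c ^ (1 - p) / (p - 1) := by
  obtain ⟨hI, hV⟩ := tail_abs p c hp hc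
  have hmB : MeasurableSet {y : ℝ | c ≤ |x - y|} := by
    have : {y : ℝ | c ≤ |x - y|} = (fun y : ℝ => |x - y|) ⁻¹' (Ici c) := rfl
    rw [this]
    exact (((continuous_const.sub continuous_id).abs)).measurable measurableSet_Ici
  have hpre : ((fun z : ℝ => -z) ⁻¹' ((fun z : ℝ => x + z) ⁻¹' {z : ℝ | c ≤ |z|}))
      = {y : ℝ | c ≤ |x - y|} := by
    ext y; simp [mem_preimage, mem_setOf_eq, sub_eq_add_neg]
  constructor
  · have t2 := integrableOn_add_preimage (fun z : ℝ => |z| ^ (-p)) {z : ℝ | c ≤ |z|} x hI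
    have t3 := integrableOn_neg_preimage _ _ t2
    rw [hpre] at t3
    exact t3.congr_fun (fun y _ => by rw [sub_eq_add_neg]) hmB
  · rw [setInt_neg (fun y : ℝ => |x - y| ^ (-p)) {y : ℝ | c ≤ |x - y|}]
    have hpre2 : ((fun z : ℝ => -z) ⁻¹' {y : ℝ | c ≤ |x - y|}) = {z : ℝ | c ≤ |x + z|} := by
      ext z; simp [mem_preimage, mem_setOf_eq, sub_neg_eq_add]
    rw [hpre2]
    simp only [sub_neg_eq_add]
    rw [setInt_add (fun u : ℝ => |u| ^ (-p)) {u : ℝ | c ≤ |u|} x] at hV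
    exact hV

lemma far_bound (s γ ξ : ℝ) (hs1 : 0 < s) (hs2 : s < 1) (hγ : 1 < γ) (hξ : 0 < ξ)
    {x : ℝ} (hx : 1 < x) :
    IntegrableOn (fun y : ℝ => ((|x| + ξ) ^ (-γ) - (|y| + ξ) ^ (-γ)) / |x - y| ^ (1 + 2 * s))
      {y : ℝ | x / 2 ≤ |x - y|} ∧
    |∫ y in {y : ℝ | x / 2 ≤ |x - y|},
        ((|x| + ξ) ^ (-γ) - (|y| + ξ) ^ (-γ)) / |x - y| ^ (1 + 2 * s)|
      ≤ (4 / s + 3 * (2 * ξ ^ (1 - γ) / (γ - 1)) + (4:ℝ) ^ γ * (4 / s)) * x ^ (-(1 + 2 * s)) := by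
  have hx0 : (0:ℝ) < x := by linarith
  have hp1 : (1:ℝ) < 1 + 2 * s := by linarith
  have hp0 : (0:ℝ) < 1 + 2 * s := by linarith
  have hp3 : (1:ℝ) + 2 * s < 3 := by linarith
  have hr : (0:ℝ) < x / 2 := by linarith
  set p : ℝ := 1 + 2 * s with hp
  set φ₀ : ℝ → ℝ := fun y => (|y| + ξ) ^ (-γ) with hφ₀
  set W : ℝ → ℝ := fun y => |x - y| ^ (-p) with hW
  set B : Set ℝ := {y : ℝ | x / 2 ≤ |x - y|} with hB
  have hBm : MeasurableSet B := by
    have : B = (fun y : ℝ => |x - y|) ⁻¹' (Ici (x / 2)) := rfl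
    rw [this]
    exact (((continuous_const.sub continuous_id).abs)).measurable measurableSet_Ici
  obtain ⟨hWint, hWval⟩ := tail_abs_shift p (x / 2) x hp1 hr
  have hWnn : ∀ y, 0 ≤ W y := fun y => Real.rpow_nonneg (abs_nonneg _) _
  have hφnn : ∀ y, 0 ≤ φ₀ y := fun y => Real.rpow_nonneg (by positivity) _
  set f : ℝ → ℝ := fun y => (φ₀ x - φ₀ y) / |x - y| ^ p with hf
  have hfm : Measurable f := f_meas γ ξ p x hξ hp0.le
  have hWm : Measurable W := by
    have e : W = fun y => (|x - y| ^ p)⁻¹ := funext fun y => Real.rpow_neg (abs_nonneg _) p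
    rw [e]
    exact (((continuous_const.sub continuous_id).abs).rpow_const
      (fun y => Or.inr hp0.le)).measurable.inv
  have hfb : ∀ y, |f y| ≤ φ₀ x * W y + φ₀ y * W y := by
    intro y
    have hden : (0:ℝ) ≤ |x - y| ^ p := Real.rpow_nonneg (abs_nonneg _) _
    have h1 : |f y| = |φ₀ x - φ₀ y| * W y := by
      rw [hf]; simp only []
      rw [abs_div, abs_of_nonneg hden, div_eq_mul_inv, hW]; simp only []
      rw [Real.rpow_neg (abs_nonneg _)]
    rw [h1, ← add_mul]
    apply mul_le_mul_of_nonneg_right ?_ (hWnn y)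
    calc |φ₀ x - φ₀ y| ≤ |φ₀ x| + |φ₀ y| := abs_sub _ _
      _ = φ₀ x + φ₀ y := by rw [abs_of_nonneg (hφnn x), abs_of_nonneg (hφnn y)]
  have hφle : ∀ y, φ₀ y ≤ ξ ^ (-γ) := fun y => phi_le γ ξ (by linarith) hξ y
  have hfint : IntegrableOn f B := by
    apply Integrable.mono (hWint.const_mul (2 * ξ ^ (-γ))) (hfm.aestronglyMeasurable.restrict)
    filter_upwards with y
    rw [Real.norm_eq_abs, Real.norm_eq_abs,
      abs_of_nonneg (mul_nonneg (by positivity) (hWnn y))]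
    calc |f y| ≤ φ₀ x * W y + φ₀ y * W y := hfb y
      _ ≤ ξ ^ (-γ) * W y + ξ ^ (-γ) * W y := by
          have := mul_le_mul_of_nonneg_right (hφle x) (hWnn y)
          have := mul_le_mul_of_nonneg_right (hφle y) (hWnn y)
          linarith
      _ = 2 * ξ ^ (-γ) * W y := by ring
  have hG2int : IntegrableOn (fun y => φ₀ y * W y) B := by
    apply Integrable.mono (hWint.const_mul (ξ ^ (-γ)))
      (((phi_cont γ ξ hξ).measurable.mul hWm).aestronglyMeasurable.restrict)
    filter_upwards with y
    rw [Real.norm_eq_abs, Real.norm_eq_abs,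
      abs_of_nonneg (mul_nonneg (Real.rpow_nonneg hξ.le _) (hWnn y))]
    show |φ₀ y * W y| ≤ _
    rw [abs_of_nonneg (mul_nonneg (hφnn y) (hWnn y))]
    exact mul_le_mul_of_nonneg_right (hφle y) (hWnn y)
  have hmono : |∫ y in B, f y| ≤ ∫ y in B, (φ₀ x * W y + φ₀ y * W y) := by
    calc |∫ y in B, f y| ≤ ∫ y in B, |f y| := by
          simpa [Real.norm_eq_abs] using
            norm_integral_le_integral_norm (μ := volume.restrict B) f
      _ ≤ ∫ y in B, (φ₀ x * W y + φ₀ y * W y) := by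
          apply setIntegral_mono_on hfint.abs ((hWint.const_mul (φ₀ x)).add hG2int) hBm
          intro y _
          exact hfb y
  have hsplit : ∫ y in B, (φ₀ x * W y + φ₀ y * W y)
      = φ₀ x * (∫ y in B, W y) + ∫ y in B, φ₀ y * W y := by
    rw [integral_add (hWint.const_mul (φ₀ x)) hG2int, MeasureTheory.integral_const_mul]
  have hWintnn : (0:ℝ) ≤ ∫ y in B, W y := setIntegral_nonneg hBm (fun y _ => hWnn y)
  have hWle : ∫ y in B, W y ≤ 4 / s * x ^ (1 - p) := by
    rw [hWval]
    have e : p - 1 = 2 * s := by rw [hp]; ring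
    have h1 : (x / 2) ^ (1 - p) ≤ 4 * x ^ (1 - p) := by
      rw [Real.div_rpow hx0.le (by norm_num : (0:ℝ) ≤ 2), div_eq_mul_inv,
        ← Real.rpow_neg (by norm_num : (0:ℝ) ≤ 2)]
      have h2 : (2:ℝ) ^ (-(1 - p)) ≤ 4 := by
        have h3 : (2:ℝ) ^ (-(1 - p)) ≤ (2:ℝ) ^ (2:ℝ) :=
          Real.rpow_le_rpow_of_exponent_le (by norm_num) (by rw [hp]; linarith)
        refine h3.trans ?_
        rw [show ((2:ℝ)) = ((2:ℕ):ℝ) by norm_num, Real.rpow_natCast]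
        norm_num
      calc x ^ (1 - p) * (2:ℝ) ^ (-(1 - p)) ≤ x ^ (1 - p) * 4 :=
            mul_le_mul_of_nonneg_left h2 (Real.rpow_nonneg hx0.le _)
        _ = 4 * x ^ (1 - p) := by ring
    rw [e]
    have e2 : 2 * (x / 2) ^ (1 - p) / (2 * s) = (x / 2) ^ (1 - p) / s :=
      mul_div_mul_left _ _ (two_ne_zero)
    rw [e2, div_mul_eq_mul_div]
    gcongr
  have hφx : φ₀ x ≤ x ^ (-(1:ℝ)) := by
    have h1 : φ₀ x ≤ x ^ (-γ) := by
      rw [hφ₀]; simp only []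
      rw [abs_of_pos hx0]
      exact Real.rpow_le_rpow_of_nonpos hx0 (by linarith) (by linarith)
    exact h1.trans (Real.rpow_le_rpow_of_exponent_le hx.le (by linarith))
  have hT1 : φ₀ x * ∫ y in B, W y ≤ 4 / s * x ^ (-p) := by
    calc φ₀ x * ∫ y in B, W y ≤ x ^ (-(1:ℝ)) * (4 / s * x ^ (1 - p)) :=
          mul_le_mul hφx hWle hWintnn (Real.rpow_nonneg hx0.le _)
      _ = 4 / s * (x ^ (-(1:ℝ)) * x ^ (1 - p)) := by ring
      _ = 4 / s * x ^ (-p) := by rw [← Real.rpow_add hx0]; ring_nf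
  set C : Set ℝ := {y : ℝ | |y| ≤ x / 4} with hC
  have hCm : MeasurableSet C := by
    have : C = (fun y : ℝ => |y|) ⁻¹' (Iic (x / 4)) := rfl
    rw [this]; exact continuous_abs.measurable measurableSet_Iic
  have hdisj : Disjoint (B ∩ C) (B \ C) := by
    rw [Set.disjoint_left]; rintro y ⟨_, hyC⟩ ⟨_, hyC'⟩; exact hyC' hyC
  have hsplit2 : ∫ y in B, φ₀ y * W y
      = (∫ y in B ∩ C, φ₀ y * W y) + ∫ y in B \ C, φ₀ y * W y := by
    rw [← setIntegral_union hdisj (hBm.diff hCm) (hG2int.mono_set inter_subset_left)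
      (hG2int.mono_set diff_subset), inter_union_diff]
  have hCφnn : (0:ℝ) ≤ 2 * ξ ^ (1 - γ) / (γ - 1) :=
    div_nonneg (by positivity) (by linarith)
  have hT2 : ∫ y in B ∩ C, φ₀ y * W y ≤ 3 * (2 * ξ ^ (1 - γ) / (γ - 1)) * x ^ (-p) := by
    have hpt : ∀ y ∈ B ∩ C, φ₀ y * W y ≤ (3 * x / 4) ^ (-p) * φ₀ y := by
      intro y hy
      have h1 : 3 * x / 4 ≤ |x - y| := by
        have h2 := abs_sub_abs_le_abs_sub x y
        have h3 : |y| ≤ x / 4 := hy.2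
        have h4 : |x| = x := abs_of_pos hx0
        linarith
      have h5 : W y ≤ (3 * x / 4) ^ (-p) :=
        Real.rpow_le_rpow_of_nonpos (by linarith) h1 (by rw [hp]; linarith)
      calc φ₀ y * W y ≤ φ₀ y * (3 * x / 4) ^ (-p) := mul_le_mul_of_nonneg_left h5 (hφnn y)
        _ = (3 * x / 4) ^ (-p) * φ₀ y := mul_comm _ _
    calc ∫ y in B ∩ C, φ₀ y * W y ≤ ∫ y in B ∩ C, (3 * x / 4) ^ (-p) * φ₀ y :=
          setIntegral_mono_on (hG2int.mono_set inter_subset_left)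
            (((phi_int γ ξ hγ hξ).1.integrableOn).const_mul _) (hBm.inter hCm) hpt
      _ = (3 * x / 4) ^ (-p) * ∫ y in B ∩ C, φ₀ y := integral_const_mul _ _
      _ ≤ (3 * x / 4) ^ (-p) * (2 * ξ ^ (1 - γ) / (γ - 1)) := by
          apply mul_le_mul_of_nonneg_left ?_ (Real.rpow_nonneg (by linarith) _)
          rw [← (phi_int γ ξ hγ hξ).2]
          exact setIntegral_le_integral (phi_int γ ξ hγ hξ).1
            (Filter.Eventually.of_forall hφnn)
      _ ≤ 3 * (2 * ξ ^ (1 - γ) / (γ - 1)) * x ^ (-p) := by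
          have h5 : (3 * x / 4) ^ (-p) ≤ 3 * x ^ (-p) := by
            have e : (3 * x / 4 : ℝ) = (3 / 4) * x := by ring
            rw [e, Real.mul_rpow (by norm_num) hx0.le]
            apply mul_le_mul_of_nonneg_right ?_ (Real.rpow_nonneg hx0.le _)
            have h6 : ((3:ℝ) / 4) ^ (-p) ≤ ((3:ℝ) / 4) ^ (-(3:ℝ)) :=
              Real.rpow_le_rpow_of_exponent_ge (by norm_num) (by norm_num)
                (by rw [hp]; linarith)
            refine h6.trans ?_
            rw [Real.rpow_neg (by norm_num), show ((3:ℝ)) = ((3:ℕ):ℝ) by norm_num,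
              Real.rpow_natCast]
            norm_num
          calc (3 * x / 4) ^ (-p) * (2 * ξ ^ (1 - γ) / (γ - 1))
              ≤ 3 * x ^ (-p) * (2 * ξ ^ (1 - γ) / (γ - 1)) :=
                mul_le_mul_of_nonneg_right h5 hCφnn
            _ = 3 * (2 * ξ ^ (1 - γ) / (γ - 1)) * x ^ (-p) := by ring
  have hT3 : ∫ y in B \ C, φ₀ y * W y ≤ (4:ℝ) ^ γ * (4 / s) * x ^ (-p) := by
    have hpt : ∀ y ∈ B \ C, φ₀ y * W y ≤ (x / 4) ^ (-γ) * W y := by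
      intro y hy
      have h2 : ¬ (|y| ≤ x / 4) := hy.2
      push_neg at h2
      have h1 : x / 4 ≤ |y| + ξ := by linarith
      exact mul_le_mul_of_nonneg_right
        (phi_mono γ ξ (by linarith) hξ (by linarith) h1) (hWnn y)
    calc ∫ y in B \ C, φ₀ y * W y ≤ ∫ y in B \ C, (x / 4) ^ (-γ) * W y :=
          setIntegral_mono_on (hG2int.mono_set diff_subset)
            ((hWint.mono_set diff_subset).const_mul _) (hBm.diff hCm) hpt
      _ = (x / 4) ^ (-γ) * ∫ y in B \ C, W y := integral_const_mul _ _
      _ ≤ (x / 4) ^ (-γ) * ∫ y in B, W y := by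
          apply mul_le_mul_of_nonneg_left ?_ (Real.rpow_nonneg (by linarith) _)
          exact setIntegral_mono_set hWint
            (Filter.Eventually.of_forall (fun y => hWnn y))
            (HasSubset.Subset.eventuallyLE diff_subset)
      _ ≤ (x / 4) ^ (-γ) * (4 / s * x ^ (1 - p)) :=
          mul_le_mul_of_nonneg_left hWle (Real.rpow_nonneg (by linarith) _)
      _ ≤ (4:ℝ) ^ γ * (4 / s) * x ^ (-p) := by
          have h1 : (x / 4) ^ (-γ) ≤ (4:ℝ) ^ γ * x ^ (-(1:ℝ)) := by
            rw [Real.div_rpow hx0.le (by norm_num), div_eq_mul_inv,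
              ← Real.rpow_neg (by norm_num)]
            have h2 : x ^ (-γ) ≤ x ^ (-(1:ℝ)) :=
              Real.rpow_le_rpow_of_exponent_le hx.le (by linarith)
            calc x ^ (-γ) * (4:ℝ) ^ (-(-γ)) = (4:ℝ) ^ γ * x ^ (-γ) := by
                  rw [neg_neg]; ring
              _ ≤ (4:ℝ) ^ γ * x ^ (-(1:ℝ)) :=
                  mul_le_mul_of_nonneg_left h2 (Real.rpow_nonneg (by norm_num) _)
          calc (x / 4) ^ (-γ) * (4 / s * x ^ (1 - p))
              ≤ ((4:ℝ) ^ γ * x ^ (-(1:ℝ))) * (4 / s * x ^ (1 - p)) :=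
                mul_le_mul_of_nonneg_right h1 (by positivity)
            _ = (4:ℝ) ^ γ * (4 / s) * (x ^ (-(1:ℝ)) * x ^ (1 - p)) := by ring
            _ = (4:ℝ) ^ γ * (4 / s) * x ^ (-p) := by rw [← Real.rpow_add hx0]; ring_nf
  refine ⟨hfint, ?_⟩
  calc |∫ y in B, f y| ≤ φ₀ x * (∫ y in B, W y) + ∫ y in B, φ₀ y * W y := by
        rw [← hsplit]; exact hmono
    _ ≤ 4 / s * x ^ (-p) + (3 * (2 * ξ ^ (1 - γ) / (γ - 1)) * x ^ (-p)
          + (4:ℝ) ^ γ * (4 / s) * x ^ (-p)) := by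
        rw [hsplit2]; exact add_le_add hT1 (add_le_add hT2 hT3)
    _ = (4 / s + 3 * (2 * ξ ^ (1 - γ) / (γ - 1)) + (4:ℝ) ^ γ * (4 / s)) * x ^ (-p) := by ring

open intervalIntegral in
lemma near_bound (s γ ξ : ℝ) (hs1 : 0 < s) (hs2 : s < 1) (hγ : 1 < γ) (hξ : 0 < ξ)
    {x ε : ℝ} (hx : 1 < x) (hε : 0 < ε) (hεr : ε < x / 2) :
    IntegrableOn (fun y : ℝ => ((|x| + ξ) ^ (-γ) - (|y| + ξ) ^ (-γ)) / |x - y| ^ (1 + 2 * s))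
      {y : ℝ | ε < |x - y| ∧ |x - y| < x / 2} ∧
    |∫ y in {y : ℝ | ε < |x - y| ∧ |x - y| < x / 2},
        ((|x| + ξ) ^ (-γ) - (|y| + ξ) ^ (-γ)) / |x - y| ^ (1 + 2 * s)|
      ≤ (γ * (γ + 1) * (2:ℝ) ^ (γ + 2) / (2 - 2 * s)) * x ^ (-(1 + 2 * s)) := by
  have hx0 : (0:ℝ) < x := by linarith
  have hp0 : (0:ℝ) < 1 + 2 * s := by linarith
  have hr : (0:ℝ) < x / 2 := by linarith
  set p : ℝ := 1 + 2 * s with hp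
  set φ₀ : ℝ → ℝ := fun y => (|y| + ξ) ^ (-γ) with hφ₀
  set f : ℝ → ℝ := fun y => (φ₀ x - φ₀ y) / |x - y| ^ p with hf
  set A : Set ℝ := {y : ℝ | ε < |x - y| ∧ |x - y| < x / 2} with hA
  set r : ℝ := x / 2 with hrdef
  have habs : Continuous (fun y : ℝ => |x - y|) := (continuous_const.sub continuous_id).abs
  have hAm : MeasurableSet A := by
    have : A = (fun y : ℝ => |x - y|) ⁻¹' (Ioi ε) ∩ (fun y : ℝ => |x - y|) ⁻¹' (Iio r) := by
      ext y; simp [hA, mem_setOf_eq]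
    rw [this]
    exact (habs.measurable measurableSet_Ioi).inter (habs.measurable measurableSet_Iio)
  have hφnn : ∀ y, 0 ≤ φ₀ y := fun y => Real.rpow_nonneg (by positivity) _
  have hφle : ∀ y, φ₀ y ≤ ξ ^ (-γ) := fun y => phi_le γ ξ (by linarith) hξ y
  have hfm : Measurable f := f_meas γ ξ p x hξ hp0.le
  -- generic bound away from singularity
  have hbd : ∀ y : ℝ, ε < |x - y| → |f y| ≤ 2 * ξ ^ (-γ) / ε ^ p := by
    intro y hy
    have hden : (0:ℝ) < ε ^ p := Real.rpow_pos_of_pos hε _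
    have hle : ε ^ p ≤ |x - y| ^ p := Real.rpow_le_rpow hε.le hy.le hp0.le
    rw [hf]; simp only []
    rw [abs_div, abs_of_nonneg (Real.rpow_nonneg (abs_nonneg _) _)]
    apply div_le_div₀ (by positivity) ?_ hden hle
    calc |φ₀ x - φ₀ y| ≤ |φ₀ x| + |φ₀ y| := abs_sub _ _
      _ = φ₀ x + φ₀ y := by rw [abs_of_nonneg (hφnn x), abs_of_nonneg (hφnn y)]
      _ ≤ 2 * ξ ^ (-γ) := by have := hφle x; have := hφle y; linarith
  -- integrability on A
  have hfint : IntegrableOn f A := by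
    apply Measure.integrableOn_of_bounded (M := 2 * ξ ^ (-γ) / ε ^ p)
    · have hsub : A ⊆ Ioo (x - r) (x + r) := by
        intro y hy
        have h2 : |x - y| < r := hy.2
        rw [abs_lt] at h2
        exact ⟨by linarith [h2.2], by linarith [h2.1]⟩
      exact ne_top_of_le_ne_top (by simp [Real.volume_Ioo]) (measure_mono hsub)
    · exact hfm.aestronglyMeasurable
    · rw [ae_restrict_iff' hAm]
      filter_upwards with y hy
      rw [Real.norm_eq_abs]
      exact hbd y hy.1
  refine ⟨hfint, ?_⟩
  -- translate to the origin
  have habs2 : ∀ z : ℝ, |x - (x + z)| = |z| := by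
    intro z; rw [show x - (x + z) = -z by ring, abs_neg]
  set S : Set ℝ := {z : ℝ | ε < |z| ∧ |z| < r} with hS
  have hpre : (fun z : ℝ => x + z) ⁻¹' A = S := by
    ext z; simp only [mem_preimage, hA, hS, mem_setOf_eq, habs2]
  set g : ℝ → ℝ := fun z => (φ₀ x - φ₀ (x + z)) / |z| ^ p with hg
  have e1 : ∫ y in A, f y = ∫ z in S, g z := by
    rw [setInt_add f A x, hpre]
    apply setIntegral_congr_fun (by
      have : S = (fun z : ℝ => |z|) ⁻¹' (Ioi ε) ∩ (fun z : ℝ => |z|) ⁻¹' (Iio r) := by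
        ext z; simp [hS, mem_setOf_eq]
      rw [this]
      exact (continuous_abs.measurable measurableSet_Ioi).inter
        (continuous_abs.measurable measurableSet_Iio))
    intro z _
    rw [hf, hg]; simp only []
    rw [habs2]
  have hSsplit : S = Ioo (-r) (-ε) ∪ Ioo ε r := by
    ext z
    simp only [hS, mem_setOf_eq, mem_union, mem_Ioo]
    rcases abs_cases z with ⟨e1', e2'⟩ | ⟨e1', e2'⟩ <;> rw [e1'] <;>
      constructor
    · rintro ⟨h1, h2⟩; right; exact ⟨h1, h2⟩
    · rintro (⟨h1, h2⟩ | ⟨h1, h2⟩) <;> constructor <;> linarith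
    · rintro ⟨h1, h2⟩; left; constructor <;> linarith
    · rintro (⟨h1, h2⟩ | ⟨h1, h2⟩) <;> constructor <;> linarith
  -- integrability of g on pieces
  have hgm : Measurable g := by
    have h1 : Continuous (fun z : ℝ => φ₀ x - φ₀ (x + z)) :=
      continuous_const.sub ((phi_cont γ ξ hξ).comp (continuous_const.add continuous_id))
    have h2 : Continuous (fun z : ℝ => |z| ^ p) :=
      continuous_abs.rpow_const (fun z => Or.inr hp0.le)
    exact h1.measurable.div h2.measurable
  have hgbd : ∀ z : ℝ, ε < |z| → |g z| ≤ 2 * ξ ^ (-γ) / ε ^ p := by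
    intro z hz
    have hden : (0:ℝ) < ε ^ p := Real.rpow_pos_of_pos hε _
    have hle : ε ^ p ≤ |z| ^ p := Real.rpow_le_rpow hε.le hz.le hp0.le
    rw [hg]; simp only []
    rw [abs_div, abs_of_nonneg (Real.rpow_nonneg (abs_nonneg _) _)]
    apply div_le_div₀ (by positivity) ?_ hden hle
    calc |φ₀ x - φ₀ (x + z)| ≤ |φ₀ x| + |φ₀ (x + z)| := abs_sub _ _
      _ = φ₀ x + φ₀ (x + z) := by rw [abs_of_nonneg (hφnn x), abs_of_nonneg (hφnn (x + z))]
      _ ≤ 2 * ξ ^ (-γ) := by have := hφle x; have := hφle (x + z); linarith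
  have hgint : ∀ (a b : ℝ), (∀ z ∈ Ioo a b, ε < |z|) → IntegrableOn g (Ioo a b) := by
    intro a b hab
    apply Measure.integrableOn_of_bounded (M := 2 * ξ ^ (-γ) / ε ^ p)
    · simp [Real.volume_Ioo]
    · exact hgm.aestronglyMeasurable
    · rw [ae_restrict_iff' measurableSet_Ioo]
      filter_upwards with z hz
      rw [Real.norm_eq_abs]
      exact hgbd z (hab z hz)
  have hgint1 : IntegrableOn g (Ioo (-r) (-ε)) := by
    apply hgint; intro z hz; rcases abs_cases z with ⟨e, _⟩ | ⟨e, _⟩ <;> rw [e] <;>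
      simp only [mem_Ioo] at hz <;> linarith
  have hgint2 : IntegrableOn g (Ioo ε r) := by
    apply hgint; intro z hz; rcases abs_cases z with ⟨e, _⟩ | ⟨e, _⟩ <;> rw [e] <;>
      simp only [mem_Ioo] at hz <;> linarith
  have hdisj : Disjoint (Ioo (-r) (-ε)) (Ioo ε r) := by
    rw [Set.disjoint_left]; intro z hz hz'
    simp only [mem_Ioo] at hz hz'; linarith
  have e2 : ∫ z in S, g z = (∫ z in Ioo (-r) (-ε), g z) + ∫ z in Ioo ε r, g z := by
    rw [hSsplit, setIntegral_union hdisj measurableSet_Ioo hgint1 hgint2]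
  -- reflect the negative piece
  have hpre2 : (fun z : ℝ => -z) ⁻¹' (Ioo (-r) (-ε)) = Ioo ε r := by
    ext z; simp only [mem_preimage, mem_Ioo]; constructor <;> rintro ⟨h1, h2⟩ <;>
      constructor <;> linarith
  have e3 : ∫ z in Ioo (-r) (-ε), g z = ∫ z in Ioo ε r, g (-z) := by
    rw [setInt_neg g (Ioo (-r) (-ε)), hpre2]
  have hgnegint : IntegrableOn (fun z => g (-z)) (Ioo ε r) := by
    have := integrableOn_neg_preimage g (Ioo (-r) (-ε)) hgint1
    rwa [hpre2] at this
  have e4 : ∫ y in A, f y = ∫ z in Ioo ε r, (g (-z) + g z) := by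
    rw [e1, e2, e3, ← integral_add hgnegint hgint2]
  -- pointwise bound on the symmetrized integrand
  set M₀ : ℝ := γ * (γ + 1) * (x / 2) ^ (-γ - 2) with hM₀
  have hM₀nn : 0 ≤ M₀ := by
    rw [hM₀]; positivity
  have hsym : ∀ z ∈ Ioo ε r, |g (-z) + g z| ≤ M₀ * z ^ (2 - p) := by
    intro z hz
    simp only [mem_Ioo] at hz
    have hz0 : 0 < z := hε.trans hz.1
    have hzr : 2 * z < x := by rw [hrdef] at hz; linarith [hz.2]
    have hxz1 : (0:ℝ) < x + z := by linarith
    have hxz2 : (0:ℝ) < x - z := by linarith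
    have eg : g (-z) + g z
        = ((φ₀ x - φ₀ (x - z)) + (φ₀ x - φ₀ (x + z))) / |z| ^ p := by
      rw [hg]; simp only []
      rw [abs_neg, ← add_div, show x + -z = x - z by ring]
    have enum : (φ₀ x - φ₀ (x - z)) + (φ₀ x - φ₀ (x + z))
        = -((x + z + ξ) ^ (-γ) + (x - z + ξ) ^ (-γ) - 2 * (x + ξ) ^ (-γ)) := by
      rw [hφ₀]; simp only []
      rw [abs_of_pos hx0, abs_of_pos hxz1, abs_of_pos hxz2]; ring
    rw [eg, enum, abs_div, abs_neg, abs_of_nonneg (Real.rpow_nonneg (abs_nonneg _) _),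
      abs_of_pos hz0]
    have hnum := phi_sym γ ξ hγ hξ hx0 hz0.le hzr
    calc |(x + z + ξ) ^ (-γ) + (x - z + ξ) ^ (-γ) - 2 * (x + ξ) ^ (-γ)| / z ^ p
        ≤ (γ * (γ + 1) * (x / 2) ^ (-γ - 2) * z ^ 2) / z ^ p := by
          exact div_le_div_of_nonneg_right hnum (Real.rpow_pos_of_pos hz0 p).le
      _ = M₀ * z ^ (2 - p) := by
          rw [hM₀, mul_div_assoc]
          congr 1
          rw [← Real.rpow_natCast z 2, ← Real.rpow_sub hz0]
          norm_num
  -- integrate the bound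
  have hrpowint : IntegrableOn (fun z : ℝ => M₀ * z ^ (2 - p)) (Ioo 0 r) := by
    have h := (intervalIntegrable_rpow' (a := 0) (b := r)
      (by rw [hp]; linarith : (-1:ℝ) < 2 - p))
    rw [intervalIntegrable_iff_integrableOn_Ioo_of_le hr.le] at h
    exact h.const_mul M₀
  have hIoosub : Ioo ε r ⊆ Ioo 0 r := Ioo_subset_Ioo hε.le le_rfl
  have hval : ∫ z in Ioo 0 r, M₀ * z ^ (2 - p) = M₀ * (r ^ (3 - p) / (3 - p)) := by
    rw [← integral_Ioc_eq_integral_Ioo, ← intervalIntegral.integral_of_le hr.le,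
      intervalIntegral.integral_const_mul]
    congr 1
    rw [integral_rpow (Or.inl (by rw [hp]; linarith))]
    rw [Real.zero_rpow (by rw [hp]; intro h; linarith [h] : (2:ℝ) - p + 1 ≠ 0)]
    rw [show (2:ℝ) - p + 1 = 3 - p by ring]
    ring
  calc |∫ y in A, f y| ≤ ∫ z in Ioo ε r, M₀ * z ^ (2 - p) := by
        rw [e4]
        calc |∫ z in Ioo ε r, (g (-z) + g z)| ≤ ∫ z in Ioo ε r, |g (-z) + g z| := by
              simpa [Real.norm_eq_abs] using norm_integral_le_integral_norm
                (μ := volume.restrict (Ioo ε r)) (fun z => g (-z) + g z)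
          _ ≤ ∫ z in Ioo ε r, M₀ * z ^ (2 - p) :=
              setIntegral_mono_on ((hgnegint.add hgint2).abs)
                (hrpowint.mono_set hIoosub) measurableSet_Ioo hsym
    _ ≤ ∫ z in Ioo 0 r, M₀ * z ^ (2 - p) := by
        apply setIntegral_mono_set hrpowint
        · have hnn : ∀ᵐ z : ℝ, z ∈ Ioo 0 r → 0 ≤ M₀ * z ^ (2 - p) :=
            ae_of_all _ (fun z hz => mul_nonneg hM₀nn (Real.rpow_nonneg hz.1.le _))
          filter_upwards [(ae_restrict_iff' measurableSet_Ioo).mpr hnn] with z h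
          exact h
        · exact HasSubset.Subset.eventuallyLE hIoosub
    _ = M₀ * (r ^ (3 - p) / (3 - p)) := hval
    _ ≤ (γ * (γ + 1) * (2:ℝ) ^ (γ + 2) / (2 - 2 * s)) * x ^ (-p) := by
        have h3p : (3:ℝ) - p = 2 - 2 * s := by rw [hp]; ring
        have h3p0 : (0:ℝ) < 3 - p := by rw [h3p]; linarith
        have hγγ : (0:ℝ) ≤ γ * (γ + 1) := by nlinarith
        have e5 : M₀ * (r ^ ((3:ℝ) - p) / (3 - p))
            = (γ * (γ + 1) / (3 - p)) * ((x / 2) ^ (-γ - 2) * (x / 2) ^ ((3:ℝ) - p)) := by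
          rw [hM₀, hrdef]; ring
        have e6 : (x / 2) ^ (-γ - 2) * (x / 2) ^ ((3:ℝ) - p) = (x / 2) ^ (1 - p - γ) := by
          rw [← Real.rpow_add hr]; congr 1; ring
        have e7 : ((x:ℝ) / 2) ^ ((1:ℝ) - p - γ) = x ^ ((1:ℝ) - p - γ) * 2 ^ (-((1:ℝ) - p - γ)) := by
          rw [Real.div_rpow hx0.le (by norm_num), div_eq_mul_inv,
            ← Real.rpow_neg (by norm_num)]
        have h8 : x ^ ((1:ℝ) - p - γ) ≤ x ^ (-p) :=
          Real.rpow_le_rpow_of_exponent_le hx.le (by linarith)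
        have h9 : (2:ℝ) ^ (-((1:ℝ) - p - γ)) ≤ 2 ^ (γ + 2) :=
          Real.rpow_le_rpow_of_exponent_le (by norm_num) (by rw [hp]; linarith)
        calc M₀ * (r ^ ((3:ℝ) - p) / (3 - p))
            = (γ * (γ + 1) / (3 - p)) * (x ^ ((1:ℝ) - p - γ) * 2 ^ (-((1:ℝ) - p - γ))) := by
              rw [e5, e6, e7]
          _ ≤ (γ * (γ + 1) / (3 - p)) * (x ^ (-p) * 2 ^ (γ + 2)) := by
              apply mul_le_mul_of_nonneg_left ?_ (div_nonneg hγγ h3p0.le)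
              exact mul_le_mul h8 h9 (Real.rpow_nonneg (by norm_num) _)
                (Real.rpow_nonneg hx0.le _)
          _ = (γ * (γ + 1) * (2:ℝ) ^ (γ + 2) / (2 - 2 * s)) * x ^ (-p) := by
              rw [h3p]; ring

lemma aux (s γ ξ : ℝ) (hs1 : 0 < s) (hs2 : s < 1) (hγ : 1 < γ) (hξ : 0 < ξ) :
    ∃ K : ℝ, 0 < K ∧ ∀ x : ℝ, 1 < x → ∀ ε : ℝ, 0 < ε → ε < x / 2 →
      |∫ y in {y : ℝ | ε < |x - y|},
          ((|x| + ξ) ^ (-γ) - (|y| + ξ) ^ (-γ)) / |x - y| ^ (1 + 2 * s)|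
        ≤ K * x ^ (-(1 + 2 * s)) := by
  set Knear : ℝ := γ * (γ + 1) * (2:ℝ) ^ (γ + 2) / (2 - 2 * s) with hKnear
  set Kfar : ℝ := 4 / s + 3 * (2 * ξ ^ (1 - γ) / (γ - 1)) + (4:ℝ) ^ γ * (4 / s) with hKfar
  have hKn : 0 < Knear := by
    rw [hKnear]
    apply div_pos ?_ (by linarith)
    have h2 : (0:ℝ) < (2:ℝ) ^ (γ + 2) := Real.rpow_pos_of_pos (by norm_num) _
    have h3 : (0:ℝ) < γ * (γ + 1) := by nlinarith
    exact mul_pos h3 h2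
  have hKf : 0 < Kfar := by
    rw [hKfar]
    have h1 : (0:ℝ) < 4 / s := by positivity
    have h2 : (0:ℝ) ≤ 2 * ξ ^ (1 - γ) / (γ - 1) :=
      div_nonneg (by positivity) (by linarith)
    have h3 : (0:ℝ) < (4:ℝ) ^ γ := Real.rpow_pos_of_pos (by norm_num) _
    nlinarith
  refine ⟨Knear + Kfar, by linarith, ?_⟩
  intro x hx ε hε hεr
  obtain ⟨hAint, hAbd⟩ := near_bound s γ ξ hs1 hs2 hγ hξ hx hε hεr
  obtain ⟨hBint, hBbd⟩ := far_bound s γ ξ hs1 hs2 hγ hξ hx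
  have habs : Continuous (fun y : ℝ => |x - y|) := (continuous_const.sub continuous_id).abs
  have hAm : MeasurableSet {y : ℝ | ε < |x - y| ∧ |x - y| < x / 2} := by
    have : {y : ℝ | ε < |x - y| ∧ |x - y| < x / 2}
        = (fun y : ℝ => |x - y|) ⁻¹' (Ioi ε) ∩ (fun y : ℝ => |x - y|) ⁻¹' (Iio (x / 2)) := by
      ext y; simp [mem_setOf_eq]
    rw [this]
    exact (habs.measurable measurableSet_Ioi).inter (habs.measurable measurableSet_Iio)
  have hBm : MeasurableSet {y : ℝ | x / 2 ≤ |x - y|} := by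
    have : {y : ℝ | x / 2 ≤ |x - y|} = (fun y : ℝ => |x - y|) ⁻¹' (Ici (x / 2)) := rfl
    rw [this]; exact habs.measurable measurableSet_Ici
  have hdisj : Disjoint {y : ℝ | ε < |x - y| ∧ |x - y| < x / 2} {y : ℝ | x / 2 ≤ |x - y|} := by
    rw [Set.disjoint_left]
    intro y hy hy'
    exact absurd hy' (not_le.mpr hy.2)
  have hset : {y : ℝ | ε < |x - y|}
      = {y : ℝ | ε < |x - y| ∧ |x - y| < x / 2} ∪ {y : ℝ | x / 2 ≤ |x - y|} := by
    ext y
    simp only [mem_setOf_eq, mem_union]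
    constructor
    · intro h
      rcases lt_or_ge (|x - y|) (x / 2) with h2 | h2
      · left; exact ⟨h, h2⟩
      · right; exact h2
    · rintro (⟨h, _⟩ | h)
      · exact h
      · linarith
  rw [hset, setIntegral_union hdisj hBm hAint hBint]
  calc |(∫ y in {y : ℝ | ε < |x - y| ∧ |x - y| < x / 2},
          ((|x| + ξ) ^ (-γ) - (|y| + ξ) ^ (-γ)) / |x - y| ^ (1 + 2 * s))
        + ∫ y in {y : ℝ | x / 2 ≤ |x - y|},
          ((|x| + ξ) ^ (-γ) - (|y| + ξ) ^ (-γ)) / |x - y| ^ (1 + 2 * s)|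
      ≤ |∫ y in {y : ℝ | ε < |x - y| ∧ |x - y| < x / 2},
          ((|x| + ξ) ^ (-γ) - (|y| + ξ) ^ (-γ)) / |x - y| ^ (1 + 2 * s)|
        + |∫ y in {y : ℝ | x / 2 ≤ |x - y|},
          ((|x| + ξ) ^ (-γ) - (|y| + ξ) ^ (-γ)) / |x - y| ^ (1 + 2 * s)| := abs_add_le _ _
    _ ≤ Knear * x ^ (-(1 + 2 * s)) + Kfar * x ^ (-(1 + 2 * s)) := add_le_add hAbd hBbd
    _ = (Knear + Kfar) * x ^ (-(1 + 2 * s)) := by ring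

/-- for s ∈ (0,1), γ > 1, ξ > 0 and φ(x) = (|x|+ξ)^{−γ} on ℝ, the
one-dimensional fractional Laplacian (−Δ)^s φ(x) = σ_s P.V. ∫ (φ(x)−φ(y))/|x−y|^{1+2s} dy
satisfies |(−Δ)^s φ(x)| ≤ C |x|^{−(1+2s)} for all |x| ≥ |x₀| > 1, with C = C(γ,s,ξ). -/
theorem stmt10 (s γ ξ σ : ℝ) (hs1 : 0 < s) (hs2 : s < 1) (hγ : 1 < γ) (hξ : 0 < ξ)
    (hσ : 0 < σ)
    (φ : ℝ → ℝ) (hφ : ∀ x : ℝ, φ x = (|x| + ξ) ^ (-γ))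
    (L : ℝ → ℝ)
    (hL : ∀ x : ℝ, Filter.Tendsto
      (fun ε : ℝ => ∫ y in {y : ℝ | ε < |x - y|}, (φ x - φ y) / |x - y| ^ (1 + 2 * s))
      (nhdsWithin 0 (Set.Ioi 0)) (nhds (L x)))
    (x₀ : ℝ) (hx₀ : 1 < |x₀|) :
    ∃ C : ℝ, 0 < C ∧ ∀ x : ℝ, |x₀| ≤ |x| → |σ * L x| ≤ C * |x| ^ (-(1 + 2 * s)) := by
  obtain ⟨K, hK, hbound⟩ := aux s γ ξ hs1 hs2 hγ hξ
  refine ⟨σ * K, by positivity, ?_⟩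
  intro x hxx
  have hx1 : 1 < |x| := lt_of_lt_of_le hx₀ hxx
  have hev : ∀ u : ℝ, φ (-u) = φ u := fun u => by rw [hφ, hφ, abs_neg]
  have key : ∀ X : ℝ, 1 < X → |L X| ≤ K * X ^ (-(1 + 2 * s)) := by
    intro X hX
    have hT : Filter.Tendsto
        (fun ε : ℝ => ∫ y in {y : ℝ | ε < |X - y|},
          ((|X| + ξ) ^ (-γ) - (|y| + ξ) ^ (-γ)) / |X - y| ^ (1 + 2 * s))
        (nhdsWithin 0 (Set.Ioi 0)) (nhds (L X)) := by
      simpa only [hφ] using hL X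
    apply le_of_tendsto hT.abs
    filter_upwards [Ioo_mem_nhdsGT_of_mem
      (⟨le_refl (0:ℝ), by linarith⟩ : (0:ℝ) ∈ Ico (0:ℝ) (X / 2))] with ε hε
    exact hbound X hX ε hε.1 hε.2
  have heven : L x = L |x| := by
    rcases le_or_gt 0 x with h | h
    · rw [abs_of_nonneg h]
    · rw [abs_of_neg h]
      have hIeq : (fun ε : ℝ => ∫ y in {y : ℝ | ε < |x - y|},
            (φ x - φ y) / |x - y| ^ (1 + 2 * s))
          = fun ε : ℝ => ∫ y in {y : ℝ | ε < |(-x) - y|},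
            (φ (-x) - φ y) / |(-x) - y| ^ (1 + 2 * s) := by
        funext ε
        rw [setInt_neg (fun y => (φ x - φ y) / |x - y| ^ (1 + 2 * s)) {y : ℝ | ε < |x - y|}]
        have hpre : (fun z : ℝ => -z) ⁻¹' {y : ℝ | ε < |x - y|}
            = {y : ℝ | ε < |(-x) - y|} := by
          ext z; simp only [mem_preimage, mem_setOf_eq]
          rw [show x - -z = -((-x) - z) by ring, abs_neg]
        rw [hpre]
        have hfun : (fun z : ℝ => (φ x - φ (-z)) / |x - -z| ^ (1 + 2 * s))
            = fun z : ℝ => (φ (-x) - φ z) / |(-x) - z| ^ (1 + 2 * s) := by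
          funext z
          rw [hev z, ← hev x, show x - -z = -((-x) - z) by ring, abs_neg]
        rw [hfun]
      have h1 := hL x
      have h2 := hL (-x)
      rw [← hIeq] at h2
      exact tendsto_nhds_unique h1 h2
  rw [abs_mul, abs_of_pos hσ, heven, mul_assoc]
  exact mul_le_mul_of_nonneg_left (key |x| hx1) hσ.le
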